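/- Let Ω be countably infinite, 𝒥_n = {f₁,…,f_n} a finite strongly independent subset of Sym(Ω) with pairwise distinct elements, and q a finite partial bijection of Ω. Then there exists q̄ ∈ Sym(Ω) ∖ 𝒥_n extending q such that 𝒥_n ∪ {q̄} is strongly independent. -/

import Mathlib

def StronglyIndependent {Ω : Type} (G : Set (Equiv.Perm Ω)) : Prop :=
  ∀ (n : ℕ) (w : FreeGroup (Fin (n + 1))), w ≠ 1 →
    ∀ f : Fin (n + 1) → Equiv.Perm Ω, Function.Injective f → (∀ i, f i ∈ G) →
      {x : Ω | FreeGroup.lift f w x = x}.Finite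

def IsPartialBijGraph {Ω : Type} (f : Set (Ω × Ω)) : Prop :=
  (∀ p ∈ f, ∀ q ∈ f, p.1 = q.1 → p.2 = q.2) ∧ (∀ p ∈ f, ∀ q ∈ f, p.2 = q.2 → p.1 = q.1)

noncomputable section

namespace SIProof

open List Equiv

variable {Ω : Type} {n : ℕ}

/-- Words over the alphabet `Option (Fin n)`; `none` is the new generator `t`. -/
abbrev WL (n : ℕ) : Type := List (Option (Fin n) × Bool)

/-- A list of letters is reduced. -/
def Red {α : Type*} (L : List (α × Bool)) : Prop :=
  L.Chain' (fun x y => x.1 = y.1 → x.2 = y.2)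

def PInj (p : Finset (Ω × Ω)) : Prop := IsPartialBijGraph (↑p : Set (Ω × Ω))

open Classical in
/-- forward lookup in a finite partial injection -/
def lookF (p : Finset (Ω × Ω)) (x : Ω) : Option Ω :=
  if h : ∃ y, (x, y) ∈ p then some h.choose else none

open Classical in
/-- backward lookup -/
def lookR (p : Finset (Ω × Ω)) (y : Ω) : Option Ω :=
  if h : ∃ x, (x, y) ∈ p then some h.choose else none

theorem lookF_mem {p : Finset (Ω × Ω)} {x y : Ω} (h : lookF p x = some y) : (x, y) ∈ p := by
  classical
  unfold lookF at h
  split at h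
  · next hh => obtain rfl : hh.choose = y := by injection h
               exact hh.choose_spec
  · exact absurd h (by simp)

theorem lookR_mem {p : Finset (Ω × Ω)} {x y : Ω} (h : lookR p y = some x) : (x, y) ∈ p := by
  classical
  unfold lookR at h
  split at h
  · next hh => obtain rfl : hh.choose = x := by injection h
               exact hh.choose_spec
  · exact absurd h (by simp)

theorem lookF_eq {p : Finset (Ω × Ω)} (hp : PInj p) {x y : Ω} (h : (x, y) ∈ p) :
    lookF p x = some y := by
  classical
  unfold lookF
  split
  · next hh => exact congrArg some (hp.1 _ hh.choose_spec _ h rfl)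
  · next hh => exact absurd ⟨y, h⟩ hh

theorem lookR_eq {p : Finset (Ω × Ω)} (hp : PInj p) {x y : Ω} (h : (x, y) ∈ p) :
    lookR p y = some x := by
  classical
  unfold lookR
  split
  · next hh => exact congrArg some (hp.2 _ hh.choose_spec _ h rfl)
  · next hh => exact absurd ⟨x, h⟩ hh

variable (f : Fin n → Equiv.Perm Ω)

/-- the permutation attached to a letter, with `t` interpreting `none` -/
def cPerm (t : Equiv.Perm Ω) (c : Option (Fin n) × Bool) : Equiv.Perm Ω :=
  cond c.2 (c.1.elim t f) (c.1.elim t f)⁻¹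

/-- the permutation attached to a word -/
def pw (t : Equiv.Perm Ω) (W : WL n) : Equiv.Perm Ω := (W.map (cPerm f t)).prod

@[simp] theorem pw_nil (t : Equiv.Perm Ω) : pw f t ([] : WL n) = 1 := by simp [pw]

theorem pw_cons (t : Equiv.Perm Ω) (c : Option (Fin n) × Bool) (L : WL n) :
    pw f t (c :: L) = cPerm f t c * pw f t L := by simp [pw]

/-- one evaluation step under a finite partial injection -/
def stepP (p : Finset (Ω × Ω)) (c : Option (Fin n) × Bool) (x : Ω) : Option Ω :=
  match c.1 with
  | some i => some (cond c.2 (f i x) ((f i)⁻¹ x))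
  | none => cond c.2 (lookF p x) (lookR p x)

/-- partial evaluation of a word at a point (rightmost letter first) -/
def evalP (p : Finset (Ω × Ω)) : WL n → Ω → Option Ω
  | [], x => some x
  | c :: L, x => (evalP p L x).bind (stepP f p c)

@[simp] theorem evalP_nil (p : Finset (Ω × Ω)) (x : Ω) : evalP f p ([] : WL n) x = some x := rfl

theorem evalP_cons (p : Finset (Ω × Ω)) (c : Option (Fin n) × Bool) (L : WL n) (x : Ω) :
    evalP f p (c :: L) x = (evalP f p L x).bind (stepP f p c) := rfl

theorem evalP_append (p : Finset (Ω × Ω)) (L₁ L₂ : WL n) (x : Ω) :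
    evalP f p (L₁ ++ L₂) x = (evalP f p L₂ x).bind (fun z => evalP f p L₁ z) := by
  induction L₁ with
  | nil => simp
  | cons c L ih =>
    rw [cons_append, evalP_cons, ih]
    cases evalP f p L₂ x <;> simp [evalP_cons]

def noneFree (L : WL n) : Prop := ∀ c ∈ L, c.1 ≠ none

theorem stepP_mono {p p' : Finset (Ω × Ω)} (hp' : PInj p') (hsub : p ⊆ p')
    {c : Option (Fin n) × Bool} {x y : Ω} (h : stepP f p c x = some y) :
    stepP f p' c x = some y := by
  obtain ⟨l, b⟩ := c
  cases l with
  | some i => exact h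
  | none =>
    cases b with
    | false =>
      simp only [stepP, cond] at h ⊢
      exact lookR_eq hp' (hsub (lookR_mem h))
    | true =>
      simp only [stepP, cond] at h ⊢
      exact lookF_eq hp' (hsub (lookF_mem h))

theorem evalP_mono {p p' : Finset (Ω × Ω)} (hp' : PInj p') (hsub : p ⊆ p')
    {L : WL n} {x y : Ω} (h : evalP f p L x = some y) : evalP f p' L x = some y := by
  induction L generalizing y with
  | nil => exact h
  | cons c L ih =>
    rw [evalP_cons] at h ⊢
    obtain ⟨z, hz, hstep⟩ := Option.bind_eq_some_iff.1 h
    rw [ih hz]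
    exact stepP_mono f hp' hsub hstep

theorem cPerm_apply_some (t : Equiv.Perm Ω) (i : Fin n) (b : Bool) (x : Ω) :
    cPerm f t (some i, b) x = cond b (f i x) ((f i)⁻¹ x) := by
  cases b <;> rfl

theorem evalP_noneFree (p : Finset (Ω × Ω)) {L : WL n} (h : noneFree L) (x : Ω) :
    evalP f p L x = some (pw f 1 L x) := by
  induction L generalizing x with
  | nil => simp
  | cons c L ih =>
    have hL : noneFree L := fun c hc => h c (mem_cons_of_mem _ hc)
    obtain ⟨l, b⟩ := c
    obtain ⟨i, rfl⟩ : ∃ i, l = some i := by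
      cases l with
      | none => exact absurd rfl (h _ mem_cons_self)
      | some i => exact ⟨i, rfl⟩
    rw [evalP_cons, ih hL]
    simp [stepP, pw_cons, Equiv.Perm.mul_apply, cPerm_apply_some]

theorem pw_eq_of_noneFree (t : Equiv.Perm Ω) {L : WL n} (h : noneFree L) :
    pw f t L = pw f 1 L := by
  unfold pw
  congr 1
  apply List.map_congr_left
  intro c hc
  obtain ⟨l, b⟩ := c
  obtain ⟨i, rfl⟩ : ∃ i, l = some i := by
    cases l with
    | none => exact absurd rfl (h _ hc)
    | some i => exact ⟨i, rfl⟩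
  rfl

theorem evalP_agree {t : Equiv.Perm Ω} {p : Finset (Ω × Ω)}
    (ht : ∀ u v : Ω, (u, v) ∈ p → t u = v) {L : WL n} {x y : Ω}
    (h : evalP f p L x = some y) : pw f t L x = y := by
  induction L generalizing y with
  | nil =>
    obtain rfl : x = y := by injection h
    simp [pw]
  | cons c L ih =>
    rw [evalP_cons] at h
    obtain ⟨z, hz, hstep⟩ := Option.bind_eq_some_iff.1 h
    have hz' := ih hz
    rw [pw_cons, Equiv.Perm.mul_apply, hz']
    obtain ⟨l, b⟩ := c
    cases l with
    | some i =>
      simp only [stepP] at hstep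
      rw [cPerm_apply_some]
      injection hstep
    | none =>
      cases b with
      | true =>
        simp only [stepP, cond] at hstep
        have := ht _ _ (lookF_mem hstep)
        simpa [cPerm] using this
      | false =>
        simp only [stepP, cond] at hstep
        have := ht _ _ (lookR_mem hstep)
        have : t⁻¹ z = y := by
          rw [← this]; simp
        simpa [cPerm] using this

theorem Red.tail' {α : Type*} {c : α × Bool} {L : List (α × Bool)} (h : Red (c :: L)) : Red L :=
  (List.isChain_cons.1 h).2

theorem red_of_reduce {α : Type*} [DecidableEq α] :
    ∀ {L : List (α × Bool)}, FreeGroup.reduce L = L → Red L := by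
  intro L
  induction L with
  | nil => intro _; exact List.isChain_nil
  | cons a L ih =>
    intro h
    rw [FreeGroup.reduce.cons] at h
    rcases hL : FreeGroup.reduce L with _ | ⟨b, t⟩
    · rw [hL] at h
      simp only at h
      obtain rfl : L = [] := by
        have := congrArg List.tail h
        simpa using this.symm
      exact List.isChain_singleton _
    · rw [hL] at h
      simp only at h
      by_cases hc : a.1 = b.1 ∧ a.2 = !b.2
      · rw [if_pos hc] at h
        exfalso
        have h1 : t.length ≤ L.length := by
          have := FreeGroup.Red.length_le (FreeGroup.reduce.red (L := L))
          rw [hL] at this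
          simpa using Nat.le_of_succ_le this
        have := congrArg List.length h
        simp at this
        omega
      · rw [if_neg hc] at h
        have hLbt : L = b :: t := by
          have := congrArg List.tail h
          simpa using this.symm
        have hredL : Red L := ih (by rw [hL, hLbt])
        rw [hLbt]
        refine List.isChain_cons_cons.2 ⟨?_, by rwa [hLbt] at hredL⟩
        intro h1
        rcases Bool.eq_or_eq_not a.2 b.2 with h2 | h2
        · exact h2
        · exact absurd ⟨h1, h2⟩ hc

theorem reduce_of_red {α : Type*} [DecidableEq α] :
    ∀ {L : List (α × Bool)}, Red L → FreeGroup.reduce L = L := by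
  intro L
  induction L with
  | nil => intro _; rfl
  | cons a L ih =>
    intro h
    have hL := ih h.tail'
    rw [FreeGroup.reduce.cons, hL]
    rcases hLc : L with _ | ⟨b, t⟩
    · rfl
    · simp only
      rw [if_neg]
      rintro ⟨h1, h2⟩
      have : a.2 = b.2 := by
        have := List.isChain_cons_cons.1 (by rw [hLc] at h; exact h)
        exact this.1 h1
      rw [this] at h2
      simp at h2

theorem red_append_right {α : Type*} {L₁ L₂ : List (α × Bool)} (h : Red (L₁ ++ L₂)) : Red L₂ :=
  ((List.isChain_append.1 h).2).1

theorem red_append_left {α : Type*} {L₁ L₂ : List (α × Bool)} (h : Red (L₁ ++ L₂)) : Red L₁ :=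
  (List.isChain_append.1 h).1

theorem red_infix {α : Type*} {M D : List (α × Bool)} (h : Red D) (hM : M <:+: D) : Red M := by
  obtain ⟨s, t, rfl⟩ := hM
  exact red_append_right (red_append_left h)

/-- adjacency inside a reduced word -/
theorem red_adj {α : Type*} {A B : List (α × Bool)} {c d : α × Bool}
    (h : Red (A ++ c :: d :: B)) : c.1 = d.1 → c.2 = d.2 := by
  have := red_append_right h
  exact (List.isChain_cons_cons.1 this).1

theorem exists_rightmost' {n : ℕ} :
    ∀ {L : WL n}, (∃ s, ((none : Option (Fin n)), s) ∈ L) →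
      ∃ L₁ s₁ M, L = L₁ ++ ((none : Option (Fin n)), s₁) :: M ∧ noneFree M := by
  intro L
  induction L with
  | nil => rintro ⟨s, hs⟩; simp at hs
  | cons c L ih =>
    rintro ⟨s, hs⟩
    by_cases hL : ∃ s', ((none : Option (Fin n)), s') ∈ L
    · obtain ⟨L₁, s₁, M, rfl, hM⟩ := ih hL
      exact ⟨c :: L₁, s₁, M, rfl, hM⟩
    · have hc : c = (none, s) := by
        rcases List.mem_cons.1 hs with h | h
        · exact h.symm
        · exact absurd ⟨s, h⟩ hL
      refine ⟨[], s, L, by rw [hc]; rfl, ?_⟩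
      intro d hd hdn
      obtain ⟨l, b⟩ := d
      simp only at hdn
      subst hdn
      exact hL ⟨b, hd⟩

theorem exists_leftmost {n : ℕ} :
    ∀ {L : WL n}, (∃ s, ((none : Option (Fin n)), s) ∈ L) →
      ∃ M s₂ L₂, L = M ++ ((none : Option (Fin n)), s₂) :: L₂ ∧ noneFree M := by
  intro L
  induction L with
  | nil => rintro ⟨s, hs⟩; simp at hs
  | cons c L ih =>
    rintro ⟨s, hs⟩
    obtain ⟨l, b⟩ := c
    cases l with
    | none => exact ⟨[], b, L, rfl, fun d hd => absurd hd List.not_mem_nil⟩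
    | some i =>
      have hL : ∃ s', ((none : Option (Fin n)), s') ∈ L := by
        rcases List.mem_cons.1 hs with h | h
        · exact absurd (congrArg Prod.fst h).symm (by simp)
        · exact ⟨s, h⟩
      obtain ⟨M, s₂, L₂, rfl, hM⟩ := ih hL
      refine ⟨(some i, b) :: M, s₂, L₂, rfl, ?_⟩
      intro d hd
      rcases List.mem_cons.1 hd with h | h
      · rw [h]; exact fun hh => by simp at hh
      · exact hM d h

theorem fix_conj {Ω : Type} (σ τ : Equiv.Perm Ω) :
    {x | (σ * τ * σ⁻¹) x = x} = σ '' {x | τ x = x} := by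
  ext x
  simp only [Set.mem_setOf_eq, Set.mem_image, Equiv.Perm.mul_apply]
  constructor
  · intro h
    refine ⟨σ⁻¹ x, show τ (σ⁻¹ x) = σ⁻¹ x from σ.injective (by simpa using h), by simp⟩
  · rintro ⟨y, hy, rfl⟩
    have hy' : τ y = y := hy
    simp [hy']



section HF

variable (f : Fin n → Equiv.Perm Ω)

theorem noneFree_exists_rep : ∀ {M : WL n}, noneFree M →
    ∃ V : List (Fin n × Bool), M = V.map (fun c => ((some c.1 : Option (Fin n)), c.2)) := by
  intro M
  induction M with
  | nil => exact fun _ => ⟨[], rfl⟩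
  | cons c M ih =>
    intro h
    obtain ⟨V, rfl⟩ := ih (fun d hd => h d (mem_cons_of_mem _ hd))
    obtain ⟨l, b⟩ := c
    cases l with
    | none => exact absurd rfl (h _ mem_cons_self)
    | some i => exact ⟨(i, b) :: V, rfl⟩

/-- fixed points of nontrivial reduced `f`-words are finite -/
theorem hfix (hinj : Function.Injective f)
    (hsi : StronglyIndependent (Set.range f)) :
    ∀ M : WL n, M ≠ [] → Red M → noneFree M → {x : Ω | pw f 1 M x = x}.Finite := by
  intro M hne hred hnf
  obtain ⟨V, rfl⟩ := noneFree_exists_rep hnf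
  have hVne : V ≠ [] := by rintro rfl; exact hne rfl
  obtain ⟨⟨i₀, b₀⟩, hi₀⟩ : ∃ c, c ∈ V := List.exists_mem_of_ne_nil V hVne
  -- n must be a successor
  obtain ⟨m, rfl⟩ : ∃ m, n = m + 1 := by
    cases n with
    | zero => exact i₀.elim0
    | succ m => exact ⟨m, rfl⟩
  have hredV : Red V := by
    unfold Red List.Chain' at hred ⊢
    rw [List.isChain_map] at hred
    exact hred.imp (fun a b h hab => h (by rw [hab]))
  have hreduce : FreeGroup.reduce V = V := reduce_of_red hredV
  have htw : (FreeGroup.mk V).toWord = V := by rw [FreeGroup.toWord_mk, hreduce]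
  have hne1 : FreeGroup.mk V ≠ 1 := by
    intro h
    have := htw
    rw [h] at this
    rw [FreeGroup.toWord_one] at this
    exact hVne this.symm
  have := hsi m (FreeGroup.mk V) hne1 f hinj (fun i => Set.mem_range_self i)
  have heq : FreeGroup.lift f (FreeGroup.mk V) = pw f 1 (V.map (fun c => ((some c.1 : Option (Fin (m+1))), c.2))) := by
    rw [FreeGroup.lift_mk]
    unfold pw
    rw [List.map_map]
    have hfun : ∀ c ∈ V, (cPerm f 1 ∘ fun c : Fin (m+1) × Bool => ((some c.1 : Option (Fin (m+1))), c.2)) c = (fun c : Fin (m+1) × Bool => cond c.2 (f c.1) (f c.1)⁻¹) c := by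
      intro c _
      obtain ⟨i, b⟩ := c
      cases b <;> rfl
    rw [List.map_congr_left hfun]
  refine Set.Finite.subset this ?_
  intro x hx
  simp only [Set.mem_setOf_eq] at hx ⊢
  rw [heq]
  exact hx

end HF

section Claims

open scoped Classical

variable (f : Fin n → Equiv.Perm Ω)
variable {p : Finset (Ω × Ω)} {a b : Ω}

theorem mem_insert_pair {u v : Ω} :
    (u, v) ∈ insert (a, b) p ↔ (u = a ∧ v = b) ∨ (u, v) ∈ p := by
  rw [Finset.mem_insert, Prod.ext_iff]

theorem PInj_insert (hp : PInj p) (ha : ∀ y, (a, y) ∉ p) (hb : ∀ z, (z, b) ∉ p) :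
    PInj (insert (a, b) p) := by
  constructor
  · rintro ⟨u, v⟩ hu ⟨u', v'⟩ hu' h
    simp only [Finset.coe_insert, Set.mem_insert_iff, Finset.mem_coe, Prod.ext_iff] at hu hu'
    dsimp only at h ⊢
    rcases hu with ⟨rfl, rfl⟩ | hu <;> rcases hu' with ⟨rfl, rfl⟩ | hu'
    · rfl
    · exact absurd hu' (h ▸ ha _)
    · exact absurd hu (h ▸ ha _)
    · exact hp.1 _ hu _ hu' h
  · rintro ⟨u, v⟩ hu ⟨u', v'⟩ hu' h
    simp only [Finset.coe_insert, Set.mem_insert_iff, Finset.mem_coe, Prod.ext_iff] at hu hu'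
    dsimp only at h ⊢
    rcases hu with ⟨rfl, rfl⟩ | hu <;> rcases hu' with ⟨rfl, rfl⟩ | hu'
    · rfl
    · exact absurd hu' (h ▸ hb _)
    · exact absurd hu (h ▸ hb _)
    · exact hp.2 _ hu _ hu' h

theorem claim_fwd (hp' : PInj (insert (a, b) p))
    {D₁ M D₂ : WL n} {s₁ : Bool} {x : Ω}
    (hM : noneFree M)
    (hred : Red (D₁ ++ ((none : Option (Fin n)), s₁) :: M ++ ((none : Option (Fin n)), true) :: D₂))
    (hy : ∃ y, evalP f (insert (a, b) p) (D₁ ++ ((none : Option (Fin n)), s₁) :: M ++ ((none : Option (Fin n)), true) :: D₂) x = some y)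
    (huse : evalP f (insert (a, b) p) D₂ x = some a)
    (h1 : ∀ z, (pw f 1 M b, z) ∉ p) (h2 : pw f 1 M b ≠ a)
    (h3 : ∀ z, (z, pw f 1 M b) ∉ p) (h4 : M ≠ [] → pw f 1 M b ≠ b) : False := by
  set p' := insert (a, b) p with hp'def
  have hstep1 : evalP f p' (((none : Option (Fin n)), true) :: D₂) x = some b := by
    rw [evalP_cons, huse, Option.bind_some]
    show lookF p' a = some b
    exact lookF_eq hp' (Finset.mem_insert_self _ _)
  obtain ⟨y, hy⟩ := hy
  rw [evalP_append, hstep1, Option.bind_some, evalP_append, evalP_cons,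
      evalP_noneFree f p' hM, Option.bind_some] at hy
  obtain ⟨w, hw, _⟩ := Option.bind_eq_some_iff.1 hy
  cases s₁ with
  | true =>
    have hmem := lookF_mem (show lookF p' (pw f 1 M b) = some w from hw)
    rcases mem_insert_pair.1 hmem with ⟨hu, _⟩ | hmem'
    · exact h2 hu
    · exact h1 w hmem'
  | false =>
    have hmem := lookR_mem (show lookR p' (pw f 1 M b) = some w from hw)
    rcases mem_insert_pair.1 hmem with ⟨_, hv⟩ | hmem'
    · by_cases hMnil : M = []
      · subst hMnil
        simp only [List.append_assoc, List.cons_append, List.nil_append] at hred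
        exact Bool.noConfusion (red_adj hred rfl)
      · exact h4 hMnil hv
    · exact h3 w hmem'

theorem claim_rev (hp' : PInj (insert (a, b) p))
    {D₁ M D₂ : WL n} {s₂ : Bool} {x : Ω}
    (hM : noneFree M)
    (hred : Red (D₁ ++ ((none : Option (Fin n)), false) :: M ++ ((none : Option (Fin n)), s₂) :: D₂))
    (huse : evalP f (insert (a, b) p) (M ++ ((none : Option (Fin n)), s₂) :: D₂) x = some b)
    (h1 : ∀ u v, (u, v) ∈ p → pw f 1 M v ≠ b)
    (h2 : ∀ u v, (u, v) ∈ p → pw f 1 M u ≠ b)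
    (h3 : pw f 1 M a ≠ b)
    (h4 : M ≠ [] → pw f 1 M b ≠ b) : False := by
  set p' := insert (a, b) p with hp'def
  rw [evalP_append] at huse
  obtain ⟨z', hz', hMz⟩ := Option.bind_eq_some_iff.1 huse
  rw [evalP_noneFree f p' hM] at hMz
  have hb' : pw f 1 M z' = b := by injection hMz
  rw [evalP_cons] at hz'
  obtain ⟨z, _, hstep⟩ := Option.bind_eq_some_iff.1 hz'
  cases s₂ with
  | true =>
    have hmem := lookF_mem (show lookF p' z = some z' from hstep)
    rcases mem_insert_pair.1 hmem with ⟨_, hv⟩ | hmem'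
    · subst hv
      by_cases hMnil : M = []
      · subst hMnil
        simp only [List.append_assoc, List.cons_append, List.nil_append] at hred
        exact Bool.noConfusion (red_adj hred rfl)
      · exact h4 hMnil hb'
    · exact h1 z z' hmem' hb'
  | false =>
    have hmem := lookR_mem (show lookR p' z = some z' from hstep)
    rcases mem_insert_pair.1 hmem with ⟨hu, _⟩ | hmem'
    · exact h3 (hu ▸ hb')
    · exact h2 z' z hmem' hb'

theorem claim_fwd2 (hp' : PInj (insert (a, b) p))
    {D₁ M D₂ : WL n} {s₂ : Bool} {x : Ω}
    (hM : noneFree M)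
    (hred : Red (D₁ ++ ((none : Option (Fin n)), true) :: M ++ ((none : Option (Fin n)), s₂) :: D₂))
    (huse : evalP f (insert (a, b) p) (M ++ ((none : Option (Fin n)), s₂) :: D₂) x = some a)
    (h1 : ∀ u v, (u, v) ∈ p → pw f 1 M v ≠ a)
    (h2 : ∀ u v, (u, v) ∈ p → pw f 1 M u ≠ a)
    (h3 : pw f 1 M b ≠ a)
    (h4 : M ≠ [] → pw f 1 M a ≠ a) : False := by
  set p' := insert (a, b) p with hp'def
  rw [evalP_append] at huse
  obtain ⟨z', hz', hMz⟩ := Option.bind_eq_some_iff.1 huse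
  rw [evalP_noneFree f p' hM] at hMz
  have ha' : pw f 1 M z' = a := by injection hMz
  rw [evalP_cons] at hz'
  obtain ⟨z, _, hstep⟩ := Option.bind_eq_some_iff.1 hz'
  cases s₂ with
  | true =>
    have hmem := lookF_mem (show lookF p' z = some z' from hstep)
    rcases mem_insert_pair.1 hmem with ⟨_, hv⟩ | hmem'
    · exact h3 (hv ▸ ha')
    · exact h1 z z' hmem' ha'
  | false =>
    have hmem := lookR_mem (show lookR p' z = some z' from hstep)
    rcases mem_insert_pair.1 hmem with ⟨hu, _⟩ | hmem'
    · subst hu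
      by_cases hMnil : M = []
      · subst hMnil
        simp only [List.append_assoc, List.cons_append, List.nil_append] at hred
        exact Bool.noConfusion (red_adj hred rfl)
      · exact h4 hMnil ha'
    · exact h2 z' z hmem' ha'

theorem claim_rev2 (hp' : PInj (insert (a, b) p))
    {D₁ M D₂ : WL n} {s₁ : Bool} {x : Ω}
    (hM : noneFree M)
    (hred : Red (D₁ ++ ((none : Option (Fin n)), s₁) :: M ++ ((none : Option (Fin n)), false) :: D₂))
    (hy : ∃ y, evalP f (insert (a, b) p) (D₁ ++ ((none : Option (Fin n)), s₁) :: M ++ ((none : Option (Fin n)), false) :: D₂) x = some y)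
    (huse : evalP f (insert (a, b) p) D₂ x = some b)
    (h1 : ∀ z, (pw f 1 M a, z) ∉ p) (h2 : pw f 1 M a ≠ b)
    (h3 : ∀ z, (z, pw f 1 M a) ∉ p) (h4 : M ≠ [] → pw f 1 M a ≠ a) : False := by
  set p' := insert (a, b) p with hp'def
  have hstep1 : evalP f p' (((none : Option (Fin n)), false) :: D₂) x = some a := by
    rw [evalP_cons, huse, Option.bind_some]
    show lookR p' b = some a
    exact lookR_eq hp' (Finset.mem_insert_self _ _)
  obtain ⟨y, hy⟩ := hy
  rw [evalP_append, hstep1, Option.bind_some, evalP_append, evalP_cons,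
      evalP_noneFree f p' hM, Option.bind_some] at hy
  obtain ⟨w, hw, _⟩ := Option.bind_eq_some_iff.1 hy
  cases s₁ with
  | true =>
    have hmem := lookF_mem (show lookF p' (pw f 1 M a) = some w from hw)
    rcases mem_insert_pair.1 hmem with ⟨hu, _⟩ | hmem'
    · by_cases hMnil : M = []
      · subst hMnil
        simp only [List.append_assoc, List.cons_append, List.nil_append] at hred
        exact Bool.noConfusion (red_adj hred rfl)
      · exact h4 hMnil hu
    · exact h1 w hmem'
  | false =>
    have hmem := lookR_mem (show lookR p' (pw f 1 M a) = some w from hw)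
    rcases mem_insert_pair.1 hmem with ⟨_, hv⟩ | hmem'
    · exact h2 hv
    · exact h3 w hmem'

def UsesNew (p' : Finset (Ω × Ω)) (a b : Ω) (W : WL n) (x : Ω) : Prop :=
  ∃ W₁ s W₂, W = W₁ ++ ((none : Option (Fin n)), s) :: W₂ ∧
    ((s = true ∧ evalP f p' W₂ x = some a) ∨ (s = false ∧ evalP f p' W₂ x = some b))

theorem no_use_agree (hp : PInj p) {W : WL n} {x y : Ω}
    (hnu : ¬ UsesNew f (insert (a, b) p) a b W x)
    (h : evalP f (insert (a, b) p) W x = some y) : evalP f p W x = some y := by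
  induction W generalizing y with
  | nil => exact h
  | cons c L ih =>
    have hnuL : ¬ UsesNew f (insert (a, b) p) a b L x := by
      rintro ⟨W₁, s, W₂, heq, hc⟩
      exact hnu ⟨c :: W₁, s, W₂, by rw [heq]; rfl, hc⟩
    rw [evalP_cons] at h ⊢
    obtain ⟨z, hz, hstep⟩ := Option.bind_eq_some_iff.1 h
    rw [ih hnuL hz, Option.bind_some]
    obtain ⟨l, sb⟩ := c
    cases l with
    | some i => exact hstep
    | none =>
      cases sb with
      | true =>
        have hmem := lookF_mem (show lookF (insert (a, b) p) z = some y from hstep)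
        rcases mem_insert_pair.1 hmem with ⟨hu, _⟩ | hmem'
        · exact absurd ⟨[], true, L, rfl, Or.inl ⟨rfl, by rw [hz, hu]⟩⟩ hnu
        · exact lookF_eq hp hmem'
      | false =>
        have hmem := lookR_mem (show lookR (insert (a, b) p) z = some y from hstep)
        rcases mem_insert_pair.1 hmem with ⟨_, hv⟩ | hmem'
        · exact absurd ⟨[], false, L, rfl, Or.inr ⟨rfl, by rw [hz, hv]⟩⟩ hnu
        · exact lookR_eq hp hmem'

end Claims

section Extend

open scoped Classical

variable (f : Fin n → Equiv.Perm Ω)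

def Good (W : WL n) : Prop :=
  W ≠ [] ∧ Red (W ++ W) ∧ ∃ s, ((none : Option (Fin n)), s) ∈ W

def domSet (p : Finset (Ω × Ω)) : Set Ω := ↑(p.image Prod.fst)
def ranSet (p : Finset (Ω × Ω)) : Set Ω := ↑(p.image Prod.snd)

theorem mem_domSet {p : Finset (Ω × Ω)} {x : Ω} : x ∈ domSet p ↔ ∃ y, (x, y) ∈ p := by
  simp only [domSet, Finset.coe_image, Set.mem_image, Finset.mem_coe]
  constructor
  · rintro ⟨⟨u, v⟩, hu, rfl⟩; exact ⟨v, hu⟩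
  · rintro ⟨y, hy⟩; exact ⟨(x, y), hy, rfl⟩

theorem mem_ranSet {p : Finset (Ω × Ω)} {y : Ω} : y ∈ ranSet p ↔ ∃ x, (x, y) ∈ p := by
  simp only [ranSet, Finset.coe_image, Set.mem_image, Finset.mem_coe]
  constructor
  · rintro ⟨⟨u, v⟩, hu, rfl⟩; exact ⟨u, hu⟩
  · rintro ⟨x, hx⟩; exact ⟨(x, y), hx, rfl⟩

def badFor (p : Finset (Ω × Ω)) (c : Ω) (W : WL n) : Set Ω :=
  ⋃ M ∈ {M : WL n | M <:+: (W ++ W)},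
    ((pw f 1 M) ⁻¹' (domSet p ∪ ranSet p ∪ {c}) ∪ (pw f 1 M) '' (domSet p ∪ ranSet p ∪ {c}) ∪
      {x | M ≠ [] ∧ Red M ∧ noneFree M ∧ pw f 1 M x = x})

theorem badFor_finite
    (hfix : ∀ M : WL n, M ≠ [] → Red M → noneFree M → {x : Ω | pw f 1 M x = x}.Finite)
    (p : Finset (Ω × Ω)) (c : Ω) (W : WL n) : (badFor f p c W).Finite := by
  apply Set.Finite.biUnion
  · exact Set.Finite.subset ((W ++ W).sublists.finite_toSet)
      (fun M hM => List.mem_sublists.2 hM.sublist)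
  · intro M _
    have hbase : (domSet p ∪ ranSet p ∪ ({c} : Set Ω)).Finite :=
      (((p.image Prod.fst).finite_toSet.union (p.image Prod.snd).finite_toSet).union
        (Set.finite_singleton c))
    refine Set.Finite.union (Set.Finite.union ?_ (hbase.image _)) ?_
    · exact Set.Finite.preimage (Set.injOn_of_injective (Equiv.injective _)) hbase
    · by_cases h1 : M = []
      · exact Set.Finite.subset (Set.finite_empty) (fun x hx => absurd h1 hx.1)
      · by_cases h2 : Red M
        · by_cases h3 : noneFree M
          · exact (hfix M h1 h2 h3).subset (fun x hx => hx.2.2.2)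
          · exact Set.Finite.subset (Set.finite_empty) (fun x hx => absurd hx.2.2.1 h3)
        · exact Set.Finite.subset (Set.finite_empty) (fun x hx => absurd hx.2.1 h2)

theorem extend_dom
    (hfix : ∀ M : WL n, M ≠ [] → Red M → noneFree M → {x : Ω | pw f 1 M x = x}.Finite)
    [Infinite Ω] {p : Finset (Ω × Ω)} (hp : PInj p) (Ws : List (WL n)) (a : Ω) :
    ∃ p' : Finset (Ω × Ω), PInj p' ∧ p ⊆ p' ∧ (∃ y, (a, y) ∈ p') ∧
      ∀ W ∈ Ws, Good W → ∀ x, evalP f p' W x = some x → evalP f p W x = some x := by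
  by_cases hd : ∃ y, (a, y) ∈ p
  · exact ⟨p, hp, Finset.Subset.refl p, hd, fun W _ _ x h => h⟩
  push_neg at hd
  have hfinbig : ((domSet p ∪ ranSet p ∪ {a}) ∪ ⋃ W ∈ {W : WL n | W ∈ Ws}, badFor f p a W).Finite := by
    refine Set.Finite.union ?_ (Set.Finite.biUnion (List.finite_toSet Ws) (fun W _ => badFor_finite f hfix p a W))
    exact ((p.image Prod.fst).finite_toSet.union (p.image Prod.snd).finite_toSet).union
      (Set.finite_singleton a)
  obtain ⟨b, hb⟩ := hfinbig.infinite_compl.nonempty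
  rw [Set.mem_compl_iff] at hb
  have hbd : b ∉ domSet p := fun h => hb (Or.inl (Or.inl (Or.inl h)))
  have hbr : b ∉ ranSet p := fun h => hb (Or.inl (Or.inl (Or.inr h)))
  have hbr' : ∀ z, (z, b) ∉ p := fun z hz => hbr (mem_ranSet.2 ⟨z, hz⟩)
  have hbW : ∀ W ∈ Ws, b ∉ badFor f p a W := fun W hW hmem =>
    hb (Or.inr (Set.mem_biUnion hW hmem))
  have hp' : PInj (insert (a, b) p) := PInj_insert hp hd hbr'
  refine ⟨insert (a, b) p, hp', Finset.subset_insert _ p, ⟨b, Finset.mem_insert_self _ _⟩, ?_⟩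
  intro W hWmem hG x hev
  obtain ⟨hWne, hWred, s', hs'⟩ := hG
  refine no_use_agree f hp ?_ hev
  rintro ⟨W₁, s, W₂, hWeq, hcase⟩
  have hDev : evalP f (insert (a, b) p) (W ++ W) x = some x := by
    rw [evalP_append, hev, Option.bind_some]; exact hev
  have hbad : ∀ M : WL n, M <:+: (W ++ W) →
      (∀ z, (pw f 1 M b, z) ∉ p) ∧ (pw f 1 M b ≠ a) ∧ (∀ z, (z, pw f 1 M b) ∉ p) ∧
      (M ≠ [] → noneFree M → pw f 1 M b ≠ b) ∧
      (∀ u v, (u, v) ∈ p → pw f 1 M v ≠ b) ∧ (∀ u v, (u, v) ∈ p → pw f 1 M u ≠ b) ∧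
      (pw f 1 M a ≠ b) := by
    intro M hMinf
    have hnb : b ∉ (pw f 1 M) ⁻¹' (domSet p ∪ ranSet p ∪ {a}) ∪
        (pw f 1 M) '' (domSet p ∪ ranSet p ∪ {a}) ∪
        {x | M ≠ [] ∧ Red M ∧ noneFree M ∧ pw f 1 M x = x} :=
      fun hmem => hbW W hWmem (Set.mem_biUnion hMinf hmem)
    refine ⟨?_, ?_, ?_, ?_, ?_, ?_, ?_⟩
    · intro z hz
      exact hnb (Or.inl (Or.inl (Or.inl (Or.inl (mem_domSet.2 ⟨z, hz⟩)))))
    · intro h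
      exact hnb (Or.inl (Or.inl (Or.inr (by rw [h]; rfl))))
    · intro z hz
      exact hnb (Or.inl (Or.inl (Or.inl (Or.inr (mem_ranSet.2 ⟨z, hz⟩)))))
    · intro hMne hMnf h
      exact hnb (Or.inr ⟨hMne, red_infix hWred hMinf, hMnf, h⟩)
    · intro u v huv h
      exact hnb (Or.inl (Or.inr ⟨v, Or.inl (Or.inr (mem_ranSet.2 ⟨u, huv⟩)), h⟩))
    · intro u v huv h
      exact hnb (Or.inl (Or.inr ⟨u, Or.inl (Or.inl (mem_domSet.2 ⟨v, huv⟩)), h⟩))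
    · intro h
      exact hnb (Or.inl (Or.inr ⟨a, Or.inr rfl, h⟩))
  rcases hcase with ⟨hs, huse⟩ | ⟨hs, huse⟩
  · -- forward use, work in the right copy
    subst hs
    have hsplit : W ++ W = (W ++ W₁) ++ ((none : Option (Fin n)), true) :: W₂ := by
      nth_rewrite 2 [hWeq]
      rw [← List.append_assoc]
    obtain ⟨L₁, s₁, M, hLM, hMnf⟩ :=
      exists_rightmost' (L := W ++ W₁) ⟨s', List.mem_append_left W₁ hs'⟩
    have hshape : W ++ W = (L₁ ++ ((none : Option (Fin n)), s₁) :: M) ++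
        ((none : Option (Fin n)), true) :: W₂ := by rw [hsplit, hLM]
    have hMinf : M <:+: (W ++ W) := by
      refine ⟨L₁ ++ [((none : Option (Fin n)), s₁)], ((none : Option (Fin n)), true) :: W₂, ?_⟩
      rw [hshape]
      simp [List.append_assoc]
    obtain ⟨c1, c2, c3, c4, _, _, _⟩ := hbad M hMinf
    exact claim_fwd f hp' hMnf (by rw [← hshape]; exact hWred) ⟨x, by rw [← hshape]; exact hDev⟩
      huse c1 c2 c3 (fun h => c4 h hMnf)
  · -- backward use, work in the left copy
    subst hs
    have hsplit : W ++ W = W₁ ++ ((none : Option (Fin n)), false) :: (W₂ ++ W) := by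
      nth_rewrite 1 [hWeq]
      rw [List.append_assoc]
      rfl
    obtain ⟨M, s₂, L₂, hLM, hMnf⟩ :=
      exists_leftmost (L := W₂ ++ W) ⟨s', List.mem_append_right W₂ hs'⟩
    have hshape : W ++ W = (W₁ ++ ((none : Option (Fin n)), false) :: M) ++
        ((none : Option (Fin n)), s₂) :: L₂ := by
      rw [hsplit, hLM, List.append_assoc]
      rfl
    have hMinf : M <:+: (W ++ W) := by
      refine ⟨W₁ ++ [((none : Option (Fin n)), false)], ((none : Option (Fin n)), s₂) :: L₂, ?_⟩
      rw [hshape]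
      simp [List.append_assoc]
    obtain ⟨_, _, _, c4, c5, c6, c7⟩ := hbad M hMinf
    have huse' : evalP f (insert (a, b) p) (M ++ ((none : Option (Fin n)), s₂) :: L₂) x = some b := by
      rw [← hLM, evalP_append, hev, Option.bind_some]
      exact huse
    exact claim_rev f hp' hMnf (by rw [← hshape]; exact hWred) huse' c5 c6 c7
      (fun h => c4 h hMnf)

theorem extend_ran
    (hfix : ∀ M : WL n, M ≠ [] → Red M → noneFree M → {x : Ω | pw f 1 M x = x}.Finite)
    [Infinite Ω] {p : Finset (Ω × Ω)} (hp : PInj p) (Ws : List (WL n)) (b : Ω) :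
    ∃ p' : Finset (Ω × Ω), PInj p' ∧ p ⊆ p' ∧ (∃ x, (x, b) ∈ p') ∧
      ∀ W ∈ Ws, Good W → ∀ x, evalP f p' W x = some x → evalP f p W x = some x := by
  by_cases hd : ∃ x, (x, b) ∈ p
  · exact ⟨p, hp, Finset.Subset.refl p, hd, fun W _ _ x h => h⟩
  push_neg at hd
  have hfinbig : ((domSet p ∪ ranSet p ∪ {b}) ∪ ⋃ W ∈ {W : WL n | W ∈ Ws}, badFor f p b W).Finite := by
    refine Set.Finite.union ?_ (Set.Finite.biUnion (List.finite_toSet Ws) (fun W _ => badFor_finite f hfix p b W))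
    exact ((p.image Prod.fst).finite_toSet.union (p.image Prod.snd).finite_toSet).union
      (Set.finite_singleton b)
  obtain ⟨a, ha⟩ := hfinbig.infinite_compl.nonempty
  rw [Set.mem_compl_iff] at ha
  have had : a ∉ domSet p := fun h => ha (Or.inl (Or.inl (Or.inl h)))
  have had' : ∀ z, (a, z) ∉ p := fun z hz => had (mem_domSet.2 ⟨z, hz⟩)
  have haW : ∀ W ∈ Ws, a ∉ badFor f p b W := fun W hW hmem =>
    ha (Or.inr (Set.mem_biUnion hW hmem))
  have hp' : PInj (insert (a, b) p) := PInj_insert hp had' (fun z hz => hd z hz)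
  refine ⟨insert (a, b) p, hp', Finset.subset_insert _ p, ⟨a, Finset.mem_insert_self _ _⟩, ?_⟩
  intro W hWmem hG x hev
  obtain ⟨hWne, hWred, s', hs'⟩ := hG
  refine no_use_agree f hp ?_ hev
  rintro ⟨W₁, s, W₂, hWeq, hcase⟩
  have hDev : evalP f (insert (a, b) p) (W ++ W) x = some x := by
    rw [evalP_append, hev, Option.bind_some]; exact hev
  have hbad : ∀ M : WL n, M <:+: (W ++ W) →
      (∀ z, (pw f 1 M a, z) ∉ p) ∧ (pw f 1 M a ≠ b) ∧ (∀ z, (z, pw f 1 M a) ∉ p) ∧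
      (M ≠ [] → noneFree M → pw f 1 M a ≠ a) ∧
      (∀ u v, (u, v) ∈ p → pw f 1 M v ≠ a) ∧ (∀ u v, (u, v) ∈ p → pw f 1 M u ≠ a) ∧
      (pw f 1 M b ≠ a) := by
    intro M hMinf
    have hna : a ∉ (pw f 1 M) ⁻¹' (domSet p ∪ ranSet p ∪ {b}) ∪
        (pw f 1 M) '' (domSet p ∪ ranSet p ∪ {b}) ∪
        {x | M ≠ [] ∧ Red M ∧ noneFree M ∧ pw f 1 M x = x} :=
      fun hmem => haW W hWmem (Set.mem_biUnion hMinf hmem)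
    refine ⟨?_, ?_, ?_, ?_, ?_, ?_, ?_⟩
    · intro z hz
      exact hna (Or.inl (Or.inl (Or.inl (Or.inl (mem_domSet.2 ⟨z, hz⟩)))))
    · intro h
      exact hna (Or.inl (Or.inl (Or.inr (by rw [h]; rfl))))
    · intro z hz
      exact hna (Or.inl (Or.inl (Or.inl (Or.inr (mem_ranSet.2 ⟨z, hz⟩)))))
    · intro hMne hMnf h
      exact hna (Or.inr ⟨hMne, red_infix hWred hMinf, hMnf, h⟩)
    · intro u v huv h
      exact hna (Or.inl (Or.inr ⟨v, Or.inl (Or.inr (mem_ranSet.2 ⟨u, huv⟩)), h⟩))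
    · intro u v huv h
      exact hna (Or.inl (Or.inr ⟨u, Or.inl (Or.inl (mem_domSet.2 ⟨v, huv⟩)), h⟩))
    · intro h
      exact hna (Or.inl (Or.inr ⟨b, Or.inr rfl, h⟩))
  rcases hcase with ⟨hs, huse⟩ | ⟨hs, huse⟩
  · -- forward use (value `a`), work in the left copy
    subst hs
    have hsplit : W ++ W = W₁ ++ ((none : Option (Fin n)), true) :: (W₂ ++ W) := by
      nth_rewrite 1 [hWeq]
      rw [List.append_assoc]
      rfl
    obtain ⟨M, s₂, L₂, hLM, hMnf⟩ :=
      exists_leftmost (L := W₂ ++ W) ⟨s', List.mem_append_right W₂ hs'⟩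
    have hshape : W ++ W = (W₁ ++ ((none : Option (Fin n)), true) :: M) ++
        ((none : Option (Fin n)), s₂) :: L₂ := by
      rw [hsplit, hLM, List.append_assoc]
      rfl
    obtain ⟨_, _, _, c4, c5, c6, c7⟩ := hbad M (by
      refine ⟨W₁ ++ [((none : Option (Fin n)), true)], ((none : Option (Fin n)), s₂) :: L₂, ?_⟩
      rw [hshape]
      simp [List.append_assoc])
    have huse' : evalP f (insert (a, b) p) (M ++ ((none : Option (Fin n)), s₂) :: L₂) x = some a := by
      rw [← hLM, evalP_append, hev, Option.bind_some]
      exact huse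
    exact claim_fwd2 f hp' hMnf (by rw [← hshape]; exact hWred) huse' c5 c6 c7
      (fun h => c4 h hMnf)
  · -- backward use (value `b`), work in the right copy
    subst hs
    have hsplit : W ++ W = (W ++ W₁) ++ ((none : Option (Fin n)), false) :: W₂ := by
      nth_rewrite 2 [hWeq]
      rw [← List.append_assoc]
    obtain ⟨L₁, s₁, M, hLM, hMnf⟩ :=
      exists_rightmost' (L := W ++ W₁) ⟨s', List.mem_append_left W₁ hs'⟩
    have hshape : W ++ W = (L₁ ++ ((none : Option (Fin n)), s₁) :: M) ++
        ((none : Option (Fin n)), false) :: W₂ := by rw [hsplit, hLM]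
    obtain ⟨c1, c2, c3, c4, _, _, _⟩ := hbad M (by
      refine ⟨L₁ ++ [((none : Option (Fin n)), s₁)], ((none : Option (Fin n)), false) :: W₂, ?_⟩
      rw [hshape]
      simp [List.append_assoc])
    exact claim_rev2 f hp' hMnf (by rw [← hshape]; exact hWred) ⟨x, by rw [← hshape]; exact hDev⟩
      huse c1 c2 c3 (fun h => c4 h hMnf)

end Extend

section Construction

open scoped Classical

variable (f : Fin n → Equiv.Perm Ω)

theorem fd_finite {p : Finset (Ω × Ω)} {W : WL n}
    (h : ∃ s, ((none : Option (Fin n)), s) ∈ W) :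
    {x : Ω | ∃ y, evalP f p W x = some y}.Finite := by
  obtain ⟨W₁, s₀, W₂, rfl, hW₂⟩ := exists_rightmost' h
  refine Set.Finite.subset
    (Set.Finite.preimage (Set.injOn_of_injective (Equiv.injective (pw f 1 W₂)))
      (((p.image Prod.fst).finite_toSet.union (p.image Prod.snd).finite_toSet))) ?_
  rintro x ⟨y, hy⟩
  rw [evalP_append] at hy
  obtain ⟨z, hz, _⟩ := Option.bind_eq_some_iff.1 hy
  rw [evalP_cons, evalP_noneFree f p hW₂, Option.bind_some] at hz
  cases s₀ with
  | true =>
    have := lookF_mem (show lookF p (pw f 1 W₂ x) = some z from hz)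
    exact Set.mem_preimage.2 (Set.mem_union_left _ (mem_domSet.2 ⟨z, this⟩))
  | false =>
    have := lookR_mem (show lookR p (pw f 1 W₂ x) = some z from hz)
    exact Set.mem_preimage.2 (Set.mem_union_right _ (mem_ranSet.2 ⟨z, this⟩))

theorem pw_append (t : Equiv.Perm Ω) (L₁ L₂ : WL n) :
    pw f t (L₁ ++ L₂) = pw f t L₁ * pw f t L₂ := by
  unfold pw
  rw [List.map_append, List.prod_append]

theorem cPerm_not (t : Equiv.Perm Ω) (l : Option (Fin n)) (s : Bool) :
    cPerm f t (l, !s) = (cPerm f t (l, s))⁻¹ := by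
  cases s <;> simp [cPerm]

/-- the main construction -/
theorem exists_perm [Countable Ω] [Infinite Ω]
    (hfx : ∀ M : WL n, M ≠ [] → Red M → noneFree M → {x : Ω | pw f 1 M x = x}.Finite)
    (q : Finset (Ω × Ω)) (hq : PInj q) :
    ∃ t : Equiv.Perm Ω, (∀ u v, (u, v) ∈ q → t u = v) ∧ (∀ i, t ≠ f i) ∧
      ∀ W : WL n, W ≠ [] → Red W → {x : Ω | pw f t W x = x}.Finite := by
  obtain ⟨e, he⟩ := exists_surjective_nat (WL n ⊕ Ω ⊕ Ω)
  -- stage 0 : add one pair making `t` different from every `f i`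
  obtain ⟨a₀, ha₀⟩ := ((q.image Prod.fst).finite_toSet).infinite_compl.nonempty
  rw [Set.mem_compl_iff] at ha₀
  have ha₀' : ∀ y, (a₀, y) ∉ q := fun y hy => ha₀ (mem_domSet.2 ⟨y, hy⟩)
  obtain ⟨b₀, hb₀⟩ :=
    (((q.image Prod.snd).finite_toSet).union (Set.finite_range fun i => f i a₀)).infinite_compl.nonempty
  rw [Set.mem_compl_iff] at hb₀
  have hb₀r : ∀ z, (z, b₀) ∉ q := fun z hz => hb₀ (Or.inl (mem_ranSet.2 ⟨z, hz⟩))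
  have hb₀f : ∀ i, b₀ ≠ f i a₀ := fun i h => hb₀ (Or.inr ⟨i, h.symm⟩)
  have hp₀ : PInj (insert (a₀, b₀) q) := PInj_insert hq ha₀' hb₀r
  set activeWords : ℕ → List (WL n) :=
    fun s => (List.range (s + 1)).filterMap (fun j => (e j).getLeft?) with hAW
  have hmemAW : ∀ (s : ℕ) (W : WL n), (∃ j, j ≤ s ∧ e j = Sum.inl W) → W ∈ activeWords s := by
    rintro s W ⟨j, hj, hej⟩
    rw [hAW]
    refine List.mem_filterMap.2 ⟨j, List.mem_range.2 (by omega), ?_⟩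
    rw [hej]
    rfl
  have hstep : ∀ (s : ℕ) (p : Finset (Ω × Ω)), PInj p → ∃ p' : Finset (Ω × Ω), PInj p' ∧ p ⊆ p' ∧
      (∀ aa, e s = Sum.inr (Sum.inl aa) → ∃ y, (aa, y) ∈ p') ∧
      (∀ bb, e s = Sum.inr (Sum.inr bb) → ∃ x, (x, bb) ∈ p') ∧
      (∀ W ∈ activeWords s, Good W → ∀ x, evalP f p' W x = some x → evalP f p W x = some x) := by
    intro s p hp
    rcases hes : e s with W | aa | bb
    · exact ⟨p, hp, Finset.Subset.refl p,
        fun aa h => absurd h Sum.inl_ne_inr,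
        fun bb h => absurd h Sum.inl_ne_inr,
        fun W _ _ x h => h⟩
    · obtain ⟨p', h1, h2, h3, h4⟩ := extend_dom f hfx hp (activeWords s) aa
      refine ⟨p', h1, h2, ?_, ?_, h4⟩
      · intro aa' h
        obtain rfl : aa = aa' := by
          injection h with h'
          injection h'
        exact h3
      · intro bb h
        injection h with h'
        cases h'
    · obtain ⟨p', h1, h2, h3, h4⟩ := extend_ran f hfx hp (activeWords s) bb
      refine ⟨p', h1, h2, ?_, ?_, h4⟩
      · intro aa h
        injection h with h'
        cases h'
      · intro bb' h
        obtain rfl : bb = bb' := by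
          injection h with h'
          injection h'
        exact h3
  set P : ℕ → {p : Finset (Ω × Ω) // PInj p} :=
    fun s => Nat.rec ⟨insert (a₀, b₀) q, hp₀⟩
      (fun s pp => ⟨(hstep s pp.1 pp.2).choose, (hstep s pp.1 pp.2).choose_spec.1⟩) s with hP
  have hPsucc : ∀ s, (P (s + 1)).1 = (hstep s (P s).1 (P s).2).choose := fun s => rfl
  have hsub : ∀ s, (P s).1 ⊆ (P (s + 1)).1 :=
    fun s => (hstep s (P s).1 (P s).2).choose_spec.2.1
  have hmono : ∀ s u, s ≤ u → (P s).1 ⊆ (P u).1 := by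
    intro s u hsu
    induction u with
    | zero => obtain rfl : s = 0 := Nat.le_zero.1 hsu; exact Finset.Subset.refl _
    | succ u ih =>
      rcases Nat.lt_or_ge s (u + 1) with h | h
      · exact (ih (Nat.lt_succ_iff.1 h)).trans (hsub u)
      · obtain rfl : s = u + 1 := le_antisymm hsu h
        exact Finset.Subset.refl _
  have hdomtask : ∀ s aa, e s = Sum.inr (Sum.inl aa) → ∃ y, (aa, y) ∈ (P (s + 1)).1 :=
    fun s aa h => (hstep s (P s).1 (P s).2).choose_spec.2.2.1 aa h
  have hrantask : ∀ s bb, e s = Sum.inr (Sum.inr bb) → ∃ x, (x, bb) ∈ (P (s + 1)).1 :=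
    fun s bb h => (hstep s (P s).1 (P s).2).choose_spec.2.2.2.1 bb h
  have hnonew : ∀ s, ∀ W ∈ activeWords s, Good W →
      ∀ x, evalP f (P (s + 1)).1 W x = some x → evalP f (P s).1 W x = some x :=
    fun s => (hstep s (P s).1 (P s).2).choose_spec.2.2.2.2
  -- the limit graph
  set U : Set (Ω × Ω) := ⋃ s, ((P s).1 : Set (Ω × Ω)) with hU
  have hUmem : ∀ u v, (u, v) ∈ U ↔ ∃ s, (u, v) ∈ (P s).1 := by
    intro u v
    rw [hU]
    simp [Set.mem_iUnion]
  have hUinjR : ∀ u v v', (u, v) ∈ U → (u, v') ∈ U → v = v' := by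
    intro u v v' h1 h2
    obtain ⟨s1, h1⟩ := (hUmem u v).1 h1
    obtain ⟨s2, h2⟩ := (hUmem u v').1 h2
    exact (P (max s1 s2)).2.1 (u, v) (hmono s1 _ (le_max_left _ _) h1)
      (u, v') (hmono s2 _ (le_max_right _ _) h2) rfl
  have hUinjL : ∀ u u' v, (u, v) ∈ U → (u', v) ∈ U → u = u' := by
    intro u u' v h1 h2
    obtain ⟨s1, h1⟩ := (hUmem u v).1 h1
    obtain ⟨s2, h2⟩ := (hUmem u' v).1 h2
    exact (P (max s1 s2)).2.2 (u, v) (hmono s1 _ (le_max_left _ _) h1)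
      (u', v) (hmono s2 _ (le_max_right _ _) h2) rfl
  have hUdom : ∀ x, ∃ y, (x, y) ∈ U := by
    intro x
    obtain ⟨j, hj⟩ := he (Sum.inr (Sum.inl x))
    obtain ⟨y, hy⟩ := hdomtask j x hj
    exact ⟨y, (hUmem x y).2 ⟨j + 1, hy⟩⟩
  have hUran : ∀ y, ∃ x, (x, y) ∈ U := by
    intro y
    obtain ⟨j, hj⟩ := he (Sum.inr (Sum.inr y))
    obtain ⟨x, hx⟩ := hrantask j y hj
    exact ⟨x, (hUmem x y).2 ⟨j + 1, hx⟩⟩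
  set tf : Ω → Ω := fun x => (hUdom x).choose with htfdef
  have htf : ∀ x, (x, tf x) ∈ U := fun x => (hUdom x).choose_spec
  have htfinj : Function.Injective tf := by
    intro x x' h
    exact hUinjL x x' (tf x) (htf x) (h ▸ htf x')
  have htfsurj : Function.Surjective tf := by
    intro y
    obtain ⟨x, hx⟩ := hUran y
    exact ⟨x, (hUinjR x (tf x) y (htf x) hx).symm ▸ rfl⟩
  set t : Equiv.Perm Ω := Equiv.ofBijective tf ⟨htfinj, htfsurj⟩ with htdef
  have htapp : ∀ x, t x = tf x := fun x => rfl
  have ht : ∀ u v, (u, v) ∈ U → t u = v := by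
    intro u v h
    rw [htapp]
    exact (hUinjR u (tf u) v (htf u) h).symm ▸ rfl
  have htP : ∀ s u v, (u, v) ∈ (P s).1 → t u = v :=
    fun s u v h => ht u v ((hUmem u v).2 ⟨s, h⟩)
  have hq0 : ∀ u v, (u, v) ∈ q → t u = v := by
    intro u v h
    exact htP 0 u v (Finset.mem_insert_of_mem h)
  have hdiff : ∀ i, t ≠ f i := by
    intro i h
    have h1 : t a₀ = b₀ := htP 0 a₀ b₀ (Finset.mem_insert_self _ _)
    rw [h] at h1
    exact hb₀f i h1.symm
  refine ⟨t, hq0, hdiff, ?_⟩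
  -- evaluations are eventually captured
  have heval : ∀ (W : WL n) (x : Ω), ∃ s, evalP f (P s).1 W x = some (pw f t W x) := by
    intro W
    induction W with
    | nil => intro x; exact ⟨0, by simp⟩
    | cons c L ih =>
      intro x
      obtain ⟨s₁, hs₁⟩ := ih x
      obtain ⟨l, sb⟩ := c
      cases l with
      | some i =>
        refine ⟨s₁, ?_⟩
        rw [evalP_cons, hs₁, Option.bind_some, pw_cons]
        show some (cond sb (f i (pw f t L x)) ((f i)⁻¹ (pw f t L x))) = _
        cases sb <;> rfl
      | none =>
        cases sb with
        | true =>
          have hmem : (pw f t L x, t (pw f t L x)) ∈ U := by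
            have := htf (pw f t L x)
            rwa [← htapp] at this
          obtain ⟨s₂, hs₂⟩ := (hUmem _ _).1 hmem
          refine ⟨max s₁ s₂, ?_⟩
          rw [evalP_cons,
            evalP_mono f (P (max s₁ s₂)).2 (hmono s₁ _ (le_max_left _ _)) hs₁,
            Option.bind_some]
          show lookF (P (max s₁ s₂)).1 (pw f t L x) = _
          rw [lookF_eq (P (max s₁ s₂)).2 (hmono s₂ _ (le_max_right _ _) hs₂)]
          rw [pw_cons]
          rfl
        | false =>
          have hmem : (t⁻¹ (pw f t L x), pw f t L x) ∈ U := by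
            have h1 := htf (t⁻¹ (pw f t L x))
            rw [← htapp] at h1
            rwa [← Equiv.Perm.mul_apply t, mul_inv_cancel, Equiv.Perm.one_apply] at h1
          obtain ⟨s₂, hs₂⟩ := (hUmem _ _).1 hmem
          refine ⟨max s₁ s₂, ?_⟩
          rw [evalP_cons,
            evalP_mono f (P (max s₁ s₂)).2 (hmono s₁ _ (le_max_left _ _)) hs₁,
            Option.bind_some]
          show lookR (P (max s₁ s₂)).1 (pw f t L x) = _
          rw [lookR_eq (P (max s₁ s₂)).2 (hmono s₂ _ (le_max_right _ _) hs₂)]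
          rw [pw_cons]
          rfl
  -- fixed points of good words are finite
  have hmaster : ∀ W : WL n, Good W → {x : Ω | pw f t W x = x}.Finite := by
    intro W hG
    obtain ⟨s₀, hs₀⟩ := he (Sum.inl W)
    have hWact : ∀ s, s₀ ≤ s → W ∈ activeWords s := fun s hss => hmemAW s W ⟨s₀, hss, hs₀⟩
    have hdescend : ∀ k x, evalP f (P (s₀ + k)).1 W x = some x →
        evalP f (P s₀).1 W x = some x := by
      intro k
      induction k with
      | zero => exact fun x h => h
      | succ k ih =>
        intro x h
        exact ih x (hnonew (s₀ + k) W (hWact _ (Nat.le_add_right _ _)) hG x h)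
    refine Set.Finite.subset (fd_finite f (p := (P s₀).1) hG.2.2) ?_
    intro x hx
    obtain ⟨s, hs⟩ := heval W x
    rw [Set.mem_setOf_eq.{0}] at hx
    rw [hx] at hs
    rcases le_or_gt s s₀ with h | h
    · exact ⟨x, evalP_mono f (P s₀).2 (hmono s s₀ h) hs⟩
    · obtain ⟨k, rfl⟩ := Nat.exists_eq_add_of_le (Nat.le_of_lt h)
      exact ⟨x, hdescend k x hs⟩
  -- cyclic reduction: all nonempty reduced words
  have hcyclic : ∀ (N : ℕ) (W : WL n), W.length ≤ N → W ≠ [] → Red W →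
      {x : Ω | pw f t W x = x}.Finite := by
    intro N
    induction N with
    | zero =>
      intro W hlen hne _
      exact absurd (List.eq_nil_of_length_eq_zero (Nat.le_zero.1 hlen)) hne
    | succ N ih =>
      intro W hlen hne hred
      by_cases hnf : noneFree W
      · rw [pw_eq_of_noneFree f t hnf]
        exact hfx W hne hred hnf
      by_cases hcyc : Red (W ++ W)
      · refine hmaster W ⟨hne, hcyc, ?_⟩
        unfold noneFree at hnf
        push_neg at hnf
        obtain ⟨c, hc, hcn⟩ := hnf
        exact ⟨c.2, by rw [← hcn]; exact hc⟩
      · have hfail : ¬ ∀ x ∈ W.getLast?, ∀ y ∈ W.head?, (x.1 = y.1 → x.2 = y.2) :=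
          fun h => hcyc (List.isChain_append.2 ⟨hred, hred, h⟩)
        push_neg at hfail
        obtain ⟨cl, hcl, ch, hch, h1, h2⟩ := hfail
        rcases W with _ | ⟨c, T⟩
        · exact absurd rfl hne
        ·
          obtain rfl : c = ch := by
            simp only [List.head?_cons, Option.mem_def, Option.some.injEq] at hch
            exact hch
          cases T with
          | nil =>
            obtain rfl : c = cl := by
              simp only [List.getLast?_singleton, Option.mem_def, Option.some.injEq] at hcl
              exact hcl
            exact absurd rfl h2
          | cons c1 T' =>
            have hTne : c1 :: T' ≠ [] := List.cons_ne_nil _ _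
            have hclT : cl ∈ (c1 :: T').getLast? := by
              rwa [List.getLast?_cons_cons] at hcl
            have hdecomp : (c1 :: T').dropLast ++ [cl] = c1 :: T' :=
              List.dropLast_append_getLast? cl hclT
            set D : WL n := (c1 :: T').dropLast with hD
            have hWdec : c :: c1 :: T' = c :: (D ++ [cl]) := by rw [hdecomp]
            have hcl2 : cl = (c.1, !c.2) := by
              exact Prod.ext h1 (Bool.eq_not_iff.mpr h2)
            have hDne : D ≠ [] := by
              intro hDnil
              rw [hDnil] at hWdec
              simp only [List.nil_append] at hWdec
              -- W = [c, cl] : contradicts reducedness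
              rw [hWdec] at hred
              have := List.isChain_cons_cons.1 hred
              rw [hcl2] at this
              have h3 := this.1 rfl
              simp at h3
            have hDred : Red D := by
              refine red_infix hred ⟨[c], [cl], ?_⟩
              rw [hWdec]
              simp
            have hDlen : D.length ≤ N := by
              have h4 := congrArg List.length hWdec
              simp only [List.length_cons, List.length_append, List.length_singleton] at h4
              simp only [List.length_cons] at hlen
              omega
            have hpwdec : pw f t (c :: c1 :: T') =
                cPerm f t c * pw f t D * (cPerm f t c)⁻¹ := by
              rw [hWdec, pw_cons, pw_append]
              have : pw f t [cl] = (cPerm f t c)⁻¹ := by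
                rw [hcl2]
                have := cPerm_not f t c.1 c.2
                rw [← this]
                simp [pw]
              rw [this, mul_assoc]
            have hset : {x : Ω | pw f t (c :: c1 :: T') x = x} =
                (cPerm f t c) '' {x : Ω | pw f t D x = x} := by
              rw [hpwdec]
              exact fix_conj (cPerm f t c) (pw f t D)
            rw [hset]
            exact (ih D hDlen hDne hDred).image _
  intro W hne hred
  exact hcyclic W.length W (le_refl _) hne hred

end Construction


end SIProof

open SIProof in
/-- Given a finite strongly independent set `𝒥ₙ = {f₁,…,fₙ}` of pairwise distinct permutations
of a countably infinite set `Ω` and a finite partial bijection `q` of `Ω`, there is a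
permutation `q̄ ∉ 𝒥ₙ` extending `q` with `𝒥ₙ ∪ {q̄}` strongly independent. -/
theorem stmt_8 (Ω : Type) [Countable Ω] [Infinite Ω] (n : ℕ) (f : Fin n → Equiv.Perm Ω)
    (hinj : Function.Injective f) (hsi : StronglyIndependent (Set.range f))
    (q : Set (Ω × Ω)) (hqfin : q.Finite) (hq : IsPartialBijGraph q) :
    ∃ qb : Equiv.Perm Ω, qb ∉ Set.range f ∧ (∀ p ∈ q, qb p.1 = p.2) ∧
      StronglyIndependent (insert qb (Set.range f)) := by
  classical
  have hfx := hfix f hinj hsi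
  have hq' : PInj hqfin.toFinset := by
    unfold PInj
    rw [Set.Finite.coe_toFinset]
    exact hq
  obtain ⟨t, hext, hdiff, hfixall⟩ := exists_perm f hfx hqfin.toFinset hq'
  refine ⟨t, ?_, ?_, ?_⟩
  · rintro ⟨i, rfl⟩
    exact hdiff i rfl
  · rintro ⟨u, v⟩ hp
    exact hext u v (hqfin.mem_toFinset.2 hp)
  · intro m w hw g hginj hgmem
    -- translate the letters
    have hletter : ∀ i : Fin (m + 1), g i = t ∨ ∃ j, f j = g i := by
      intro i
      rcases Set.mem_insert_iff.1 (hgmem i) with h | h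
      · exact Or.inl h
      · exact Or.inr h
    set φ : Fin (m + 1) → Option (Fin n) := fun i =>
      if h : g i = t then none else some (((hletter i).resolve_left h).choose) with hφdef
    have hφ : ∀ i, ((φ i).elim t f : Equiv.Perm Ω) = g i := by
      intro i
      rw [hφdef]
      dsimp only
      split
      · next h => exact h.symm
      · next h => exact ((hletter i).resolve_left h).choose_spec
    have hφinj : Function.Injective φ := by
      intro i i' h
      apply hginj
      rw [← hφ i, ← hφ i', h]
    set W : WL n := (FreeGroup.toWord w).map (fun c => (φ c.1, c.2)) with hW
    have hWne : W ≠ [] := by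
      rw [hW]
      intro h
      rw [List.map_eq_nil_iff] at h
      exact hw (FreeGroup.toWord_eq_nil_iff.1 h)
    have hWred : Red W := by
      have h0 : Red (FreeGroup.toWord w) := red_of_reduce (FreeGroup.reduce_toWord w)
      rw [hW]
      unfold Red List.Chain' at h0 ⊢
      rw [List.isChain_map]
      refine h0.imp ?_
      intro aa bb h hab
      exact h (hφinj hab)
    have hlift : FreeGroup.lift g w = pw f t W := by
      conv_lhs => rw [← FreeGroup.mk_toWord (x := w)]
      rw [FreeGroup.lift_mk, hW]
      unfold pw
      rw [List.map_map]
      congr 1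
      apply List.map_congr_left
      intro c _
      obtain ⟨i, b⟩ := c
      cases b with
      | true =>
        show (g i : Equiv.Perm Ω) = cPerm f t (φ i, true)
        rw [← hφ i]
        rfl
      | false =>
        show ((g i)⁻¹ : Equiv.Perm Ω) = cPerm f t (φ i, false)
        rw [← hφ i]
        rfl
    have : {x : Ω | FreeGroup.lift g w x = x} = {x : Ω | pw f t W x = x} := by
      ext x
      rw [Set.mem_setOf_eq, Set.mem_setOf_eq, hlift]
    rw [this]
    exact hfixall W hWne hWred
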